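/- For all ρ > 0, μ > 0, κ > 0, if p* is an optimal solution of the dual problem (a minimizer of θ) and p_DS* is the unique minimizer of θ_{ρ,μ,κ}, then ‖p_DS*‖² ≤ ‖p*‖² + (2ρ/κ)D_f + (2μ/κ)D_g. In particular, if ε > 0, D_f > 0, D_g > 0, R > 0, ‖p*‖ ≤ R, and ρ = ε/(4 D_f), μ = ε/(4 D_g), κ = ε/(2 R²), then ‖p_DS*‖ ≤ √3·R. -/

import Mathlib

open scoped RealInnerProductSpace
noncomputable section

/-- `Euc k` is the Euclidean space `ℝ^k`. -/
abbrev Euc (k : ℕ) := EuclideanSpace ℝ (Fin k)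

/-- `f` is proper: nowhere `-∞` and somewhere finite. -/
def IsProperFn {k : ℕ} (f : Euc k → EReal) : Prop :=
  (∀ x, f x ≠ ⊥) ∧ ∃ x, f x ≠ ⊤

/-- Convexity of an extended-real-valued function. -/
def IsConvexFn {k : ℕ} (f : Euc k → EReal) : Prop :=
  ∀ x y : Euc k, ∀ t : ℝ, 0 < t → t < 1 →
    f (t • x + (1 - t) • y) ≤ (t : EReal) * f x + ((1 - t : ℝ) : EReal) * f y

/-- `f` is proper, convex, lower semicontinuous with bounded effective domain. -/
def NiceFn {k : ℕ} (f : Euc k → EReal) : Prop :=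
  IsProperFn f ∧ IsConvexFn f ∧ LowerSemicontinuous f ∧
    Bornology.IsBounded {x | f x ≠ ⊤}

/-- The Fenchel conjugate `f*(q) = sup_x {⟨q,x⟩ - f(x)}` (real-valued). -/
noncomputable def conjFn {k : ℕ} (f : Euc k → EReal) (q : Euc k) : ℝ :=
  (⨆ x, ((⟪q, x⟫ : ℝ) : EReal) - f x).toReal

/-- The Fenchel conjugate as an extended real. -/
noncomputable def conjE {k : ℕ} (f : Euc k → EReal) (q : Euc k) : EReal :=
  ⨆ x, ((⟪q, x⟫ : ℝ) : EReal) - f x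

/-- The smoothed conjugate `f_r*(q) = sup_x {⟨q,x⟩ - f(x) - (r/2)‖x‖²}`. -/
noncomputable def conjSm {k : ℕ} (f : Euc k → EReal) (r : ℝ) (q : Euc k) : ℝ :=
  (⨆ x, ((⟪q, x⟫ - r / 2 * ‖x‖ ^ 2 : ℝ) : EReal) - f x).toReal

/-- The proximal objective `x ↦ f(x) + (r/2)‖u - x‖²`. -/
noncomputable def proxObj {k : ℕ} (f : Euc k → EReal) (r : ℝ) (u x : Euc k) : EReal :=
  f x + ((r / 2 * ‖u - x‖ ^ 2 : ℝ) : EReal)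

/-- `D_f = sup {‖x‖²/2 : x ∈ dom f}`. -/
noncomputable def Dsup {k : ℕ} (f : Euc k → EReal) : ℝ :=
  sSup ((fun x : Euc k => ‖x‖ ^ 2 / 2) '' {x | f x ≠ ⊤})

/-- `x0` is the unique global minimizer of `h`. -/
def UniqMin {α : Type*} {β : Type*} [Preorder β] (h : α → β) (x0 : α) : Prop :=
  (∀ x, h x0 ≤ h x) ∧ ∀ x, (∀ y, h x ≤ h y) → x = x0

/-- The dual objective `θ(p) = f*(A*p) + g*(-p)`. -/
noncomputable def theta {n m : ℕ} (f : Euc n → EReal) (g : Euc m → EReal)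
    (A : Euc n →L[ℝ] Euc m) (p : Euc m) : ℝ :=
  conjFn f (ContinuousLinearMap.adjoint A p) + conjFn g (-p)

/-- The singly smoothed dual objective `θ_{ρ,μ}(p) = f_ρ*(A*p) + g_μ*(-p)`. -/
noncomputable def thetaSm {n m : ℕ} (f : Euc n → EReal) (g : Euc m → EReal)
    (A : Euc n →L[ℝ] Euc m) (r s : ℝ) (p : Euc m) : ℝ :=
  conjSm f r (ContinuousLinearMap.adjoint A p) + conjSm g s (-p)

/-- The doubly smoothed dual objective `θ_{ρ,μ,κ}(p) = θ_{ρ,μ}(p) + (κ/2)‖p‖²`. -/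
noncomputable def thetaSmK {n m : ℕ} (f : Euc n → EReal) (g : Euc m → EReal)
    (A : Euc n →L[ℝ] Euc m) (r s c : ℝ) (p : Euc m) : ℝ :=
  thetaSm f g A r s p + c / 2 * ‖p‖ ^ 2

/-- The optimal value of the primal problem `v(P) = inf {f(x) + g(Ax)}`. -/
noncomputable def vPrimal {n m : ℕ} (f : Euc n → EReal) (g : Euc m → EReal)
    (A : Euc n →L[ℝ] Euc m) : EReal := ⨅ x, f x + g (A x)

/-- The optimal value of the dual problem `v(D) = -inf θ`. -/
noncomputable def vDual {n m : ℕ} (f : Euc n → EReal) (g : Euc m → EReal)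
    (A : Euc n →L[ℝ] Euc m) : ℝ := -(⨅ p, theta f g A p)

/-- A proper, lsc function with bounded effective domain is bounded below. -/
lemma aux_fbdd {k : ℕ} {f : Euc k → EReal} (hp : ∀ x, f x ≠ ⊥)
    (hl : LowerSemicontinuous f) (hb : Bornology.IsBounded {x | f x ≠ ⊤}) :
    ∃ b : ℝ, ∀ x, (b : EReal) ≤ f x := by
  by_contra h
  push_neg at h
  choose u hu using fun j : ℕ => h (-(j : ℝ))
  have hmem : ∀ j, u j ∈ closure {x | f x ≠ ⊤} := by
    intro j
    apply subset_closure
    intro ht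
    exact absurd (hu j) (by simp [ht])
  obtain ⟨x, -, φ, hφ, htend⟩ := hb.isCompact_closure.tendsto_subseq hmem
  obtain ⟨c, hc⟩ : ∃ c : ℝ, (c : EReal) < f x := by
    rcases eq_or_ne (f x) ⊤ with hfx | hfx
    · exact ⟨0, by simp [hfx]⟩
    · refine ⟨(f x).toReal - 1, ?_⟩
      conv_rhs => rw [← EReal.coe_toReal hfx (hp x)]
      exact_mod_cast sub_one_lt _
  have hev : ∀ᶠ j in Filter.atTop, (c : EReal) < f ((u ∘ φ) j) :=
    htend.eventually (hl x c hc)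
  obtain ⟨j, hj1, hj2⟩ := (hev.and (Filter.eventually_ge_atTop ⌈-c⌉₊)).exists
  have h3 : f (u (φ j)) < ((-(φ j : ℝ) : ℝ) : EReal) := hu (φ j)
  have h4 : (c : EReal) < ((-(φ j : ℝ) : ℝ) : EReal) := lt_trans hj1 h3
  rw [EReal.coe_lt_coe_iff] at h4
  have h5 : ((⌈-c⌉₊ : ℕ) : ℝ) ≤ ((φ j : ℕ) : ℝ) := by
    exact_mod_cast le_trans hj2 hφ.le_apply
  have h6 := Nat.le_ceil (-c)
  linarith

/-- Facts about `sup_x (t x - f x)` when `f` is bounded below and `t` bounded on dom f. -/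
lemma aux_sup_facts {k : ℕ} {f : Euc k → EReal} (hp : ∀ x, f x ≠ ⊥) (x0 : Euc k)
    (hx0 : f x0 ≠ ⊤) {b : ℝ} (hb : ∀ x, (b : EReal) ≤ f x) (t : Euc k → ℝ) {C : ℝ}
    (hC : ∀ x, f x ≠ ⊤ → t x ≤ C) :
    (∀ x, f x ≠ ⊤ → t x - (f x).toReal ≤ (⨆ y, ((t y : ℝ) : EReal) - f y).toReal) ∧
    (∀ ub : ℝ, (∀ x, f x ≠ ⊤ → t x - (f x).toReal ≤ ub) →
      (⨆ y, ((t y : ℝ) : EReal) - f y).toReal ≤ ub) := by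
  have hterm : ∀ x, f x ≠ ⊤ →
      ((t x - (f x).toReal : ℝ) : EReal) = ((t x : ℝ) : EReal) - f x := by
    intro x hx
    rw [EReal.coe_sub, EReal.coe_toReal hx (hp x)]
  have hle : ∀ x, f x ≠ ⊤ →
      ((t x - (f x).toReal : ℝ) : EReal) ≤ ⨆ y, ((t y : ℝ) : EReal) - f y := by
    intro x hx
    rw [hterm x hx]
    exact le_iSup (fun y => ((t y : ℝ) : EReal) - f y) x
  have hub : ∀ ub : ℝ, (∀ x, f x ≠ ⊤ → t x - (f x).toReal ≤ ub) →
      (⨆ y, ((t y : ℝ) : EReal) - f y) ≤ (ub : EReal) := by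
    intro ub h
    apply iSup_le
    intro x
    by_cases hx : f x = ⊤
    · simp [hx, EReal.sub_top]
    · rw [← hterm x hx]
      exact_mod_cast h x hx
  have hSbot : (⨆ y, ((t y : ℝ) : EReal) - f y) ≠ ⊥ := by
    intro hS
    have := hle x0 hx0
    rw [hS, le_bot_iff] at this
    exact EReal.coe_ne_bot _ this
  have hStop : (⨆ y, ((t y : ℝ) : EReal) - f y) ≠ ⊤ := by
    intro hS
    have hx : ∀ x, f x ≠ ⊤ → t x - (f x).toReal ≤ C - b := by
      intro x hx
      have hbx : b ≤ (f x).toReal := by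
        have h1 := hb x
        rw [← EReal.coe_toReal hx (hp x)] at h1
        exact_mod_cast h1
      have := hC x hx
      linarith
    have := hub (C - b) hx
    rw [hS, top_le_iff] at this
    exact EReal.coe_ne_top _ this
  constructor
  · intro x hx
    have := EReal.toReal_le_toReal (hle x hx) (EReal.coe_ne_bot _) hStop
    rwa [EReal.toReal_coe] at this
  · intro ub h
    have := EReal.toReal_le_toReal (hub ub h) hSbot (EReal.coe_ne_top _)
    rwa [EReal.toReal_coe] at this

/-- The key conjugate bounds: `f_r* ≤ f* ≤ f_r* + r D_f`. -/
lemma aux_conj_bounds {k : ℕ} {f : Euc k → EReal} (hf : NiceFn f) {r : ℝ} (hr : 0 < r)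
    (q : Euc k) :
    conjSm f r q ≤ conjFn f q ∧ conjFn f q ≤ conjSm f r q + r * Dsup f := by
  obtain ⟨⟨hp, x0, hx0⟩, hconv, hl, hbd⟩ := hf
  obtain ⟨b, hb⟩ := aux_fbdd hp hl hbd
  obtain ⟨M, hM⟩ := isBounded_iff_forall_norm_le.mp hbd
  have hD : ∀ x, f x ≠ ⊤ → ‖x‖ ^ 2 / 2 ≤ Dsup f := by
    intro x hx
    apply le_csSup
    · refine ⟨M ^ 2 / 2, ?_⟩
      rintro _ ⟨y, hy, rfl⟩
      have := hM y hy
      nlinarith [norm_nonneg y]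
    · exact ⟨x, hx, rfl⟩
  have hCt : ∀ x, f x ≠ ⊤ → (⟪q, x⟫ : ℝ) ≤ ‖q‖ * M + 1 := by
    intro x hx
    have h1 := real_inner_le_norm q x
    have h2 := hM x hx
    nlinarith [norm_nonneg q]
  have hCt' : ∀ x, f x ≠ ⊤ → (⟪q, x⟫ - r / 2 * ‖x‖ ^ 2 : ℝ) ≤ ‖q‖ * M + 1 := by
    intro x hx
    have h1 := hCt x hx
    nlinarith [sq_nonneg ‖x‖, hr.le]
  obtain ⟨hi, hii⟩ := aux_sup_facts hp x0 hx0 hb (fun x => (⟪q, x⟫ : ℝ)) hCt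
  obtain ⟨hi', hii'⟩ := aux_sup_facts hp x0 hx0 hb
    (fun x => (⟪q, x⟫ - r / 2 * ‖x‖ ^ 2 : ℝ)) hCt'
  constructor
  · apply hii'
    intro x hx
    have h1 := hi x hx
    have h2 : (0 : ℝ) ≤ r / 2 * ‖x‖ ^ 2 := by positivity
    unfold conjFn
    linarith
  · apply hii
    intro x hx
    have h1 := hi' x hx
    have h2 := hD x hx
    have h3 : r * (‖x‖ ^ 2 / 2) ≤ r * Dsup f := mul_le_mul_of_nonneg_left h2 hr.le
    unfold conjSm
    linarith

/-- Bound on the minimizer of the doubly smoothed dual objective: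
`‖p_DS*‖² ≤ ‖p*‖² + (2ρ/κ) D_f + (2μ/κ) D_g`, and for the parameter choice
`ρ = ε/(4 D_f), μ = ε/(4 D_g), κ = ε/(2R²)` with `‖p*‖ ≤ R` one has `‖p_DS*‖ ≤ √3 R`. -/

theorem stmt14 (n m : ℕ) (f : Euc n → EReal) (g : Euc m → EReal)
    (A : Euc n →L[ℝ] Euc m) (hf : NiceFn f) (hg : NiceFn g)
    (ρ μ κ : ℝ) (hρ : 0 < ρ) (hμ : 0 < μ) (hκ : 0 < κ)
    (pstar : Euc m) (hpstar : ∀ p, theta f g A pstar ≤ theta f g A p)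
    (pDS : Euc m) (hpDS : UniqMin (thetaSmK f g A ρ μ κ) pDS) :
    ‖pDS‖ ^ 2 ≤ ‖pstar‖ ^ 2 + 2 * ρ / κ * Dsup f + 2 * μ / κ * Dsup g ∧
    ∀ ε R : ℝ, 0 < ε → 0 < Dsup f → 0 < Dsup g → 0 < R → ‖pstar‖ ≤ R →
      ρ = ε / (4 * Dsup f) → μ = ε / (4 * Dsup g) → κ = ε / (2 * R ^ 2) →
      ‖pDS‖ ≤ Real.sqrt 3 * R := by
  have Hf := fun q => aux_conj_bounds hf hρ q
  have Hg := fun q => aux_conj_bounds hg hμ q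
  have h1 : ∀ p : Euc m, thetaSm f g A ρ μ p ≤ theta f g A p := fun p =>
    add_le_add (Hf _).1 (Hg _).1
  have h2 : ∀ p : Euc m, theta f g A p ≤ thetaSm f g A ρ μ p + ρ * Dsup f + μ * Dsup g := by
    intro p
    have e1 := (Hf (ContinuousLinearMap.adjoint A p)).2
    have e2 := (Hg (-p)).2
    unfold theta thetaSm
    linarith
  have h3 : thetaSm f g A ρ μ pDS + κ / 2 * ‖pDS‖ ^ 2 ≤
      thetaSm f g A ρ μ pstar + κ / 2 * ‖pstar‖ ^ 2 := hpDS.1 pstar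
  have h4 := hpstar pDS
  have e1 := h1 pstar
  have e2 := h2 pDS
  have hchain : κ / 2 * ‖pDS‖ ^ 2 ≤ κ / 2 * ‖pstar‖ ^ 2 + ρ * Dsup f + μ * Dsup g := by
    linarith
  have hκ' : κ ≠ 0 := ne_of_gt hκ
  have key : ‖pDS‖ ^ 2 ≤ ‖pstar‖ ^ 2 + 2 * ρ / κ * Dsup f + 2 * μ / κ * Dsup g := by
    rw [div_mul_eq_mul_div, div_mul_eq_mul_div, ← sub_nonneg]
    have expand : ‖pstar‖ ^ 2 + 2 * ρ * Dsup f / κ + 2 * μ * Dsup g / κ - ‖pDS‖ ^ 2 =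
        (κ / 2 * ‖pstar‖ ^ 2 + ρ * Dsup f + μ * Dsup g - κ / 2 * ‖pDS‖ ^ 2) * (2 / κ) := by
      field_simp
    rw [expand]
    apply mul_nonneg (by linarith) (by positivity)
  refine ⟨key, ?_⟩
  intro ε R hε hDf hDg hR hpR hρε hμε hκε
  have eρ : 2 * ρ / κ * Dsup f = R ^ 2 := by
    rw [hρε, hκε]
    field_simp
    ring
  have eμ : 2 * μ / κ * Dsup g = R ^ 2 := by
    rw [hμε, hκε]
    field_simp
    ring
  have hp2 : ‖pstar‖ ^ 2 ≤ R ^ 2 := by nlinarith [norm_nonneg pstar]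
  have hfin : ‖pDS‖ ^ 2 ≤ 3 * R ^ 2 := by
    rw [eρ, eμ] at key
    linarith
  have h7 := Real.sqrt_le_sqrt hfin
  rw [Real.sqrt_sq (norm_nonneg _)] at h7
  calc ‖pDS‖ ≤ Real.sqrt (3 * R ^ 2) := h7
    _ = Real.sqrt 3 * R := by
        rw [Real.sqrt_mul (by norm_num : (0:ℝ) ≤ 3), Real.sqrt_sq hR.le]
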